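/- For $\Re(s) > 1$, one has the identity $\sum_{n=1}^\infty \frac{(-1)^{A(n)}}{n^s} = \frac{2^s + 1}{2^s - 1} \cdot \frac{\zeta(2s)}{\zeta(s)}$. -/

import Mathlib

open Complex Finset Filter Asymptotics intervalIntegral
open scoped Real Topology Classical

noncomputable section

/-- The additive prime divisor function `A(n) = ∑_{p^α ∥ n} α p`. -/
def Apd (n : ℕ) : ℕ := n.factorization.sum fun p a => a * p

/-- The completely multiplicative function `ψ_{h/q}(n) = e^{2πi h A(n)/q}`. -/
def psiA (h : ℤ) (q : ℕ) (n : ℕ) : ℂ :=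
  Complex.exp (2 * (Real.pi : ℂ) * Complex.I * (h : ℂ) * (Apd n : ℂ) / (q : ℂ))

/-- The summatory function `∑_{n ≤ x} ψ_{h/q}(n)`. -/
def Spsi (h : ℤ) (q : ℕ) (x : ℝ) : ℂ := ∑ n ∈ Finset.Icc 1 ⌊x⌋₊, psiA h q n

/-- The Dirichlet series `L(s, ψ_{h/q})`. -/
def Lpsi (h : ℤ) (q : ℕ) (s : ℂ) : ℂ := ∑' n : ℕ, psiA h q n / (n : ℂ) ^ s

/-- the ratio μ(q)/φ(q) -/
def mphi (q : ℕ) : ℝ := (ArithmeticFunction.moebius q : ℝ) / (Nat.totient q : ℝ)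

/-- Gauss sum τ(χ) = ∑_{ℓ mod q} χ(ℓ) e^{2πiℓ/q}. -/
def gaussS {q : ℕ} (χ : DirichletCharacter ℂ q) : ℂ :=
  ∑ l ∈ Finset.range q, χ (l : ZMod q) * Complex.exp (2 * (Real.pi : ℂ) * Complex.I * (l : ℂ) / (q : ℂ))

/-- conjugate Dirichlet character -/
def conjChar {q : ℕ} (χ : DirichletCharacter ℂ q) : DirichletCharacter ℂ q :=
  χ.ringHomComp (starRingEnd ℂ)

/-- `T_{h,q}(s) = ∑_p ∑_{k ≥ 2} (e^{2πiphk/q} - e^{2πip^k h/q})/(k p^{sk})`. -/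
def Thq (h : ℤ) (q : ℕ) (s : ℂ) : ℂ :=
  ∑' (p : Nat.Primes) (k : ℕ),
    (Complex.exp (2 * (Real.pi : ℂ) * Complex.I * ((p : ℕ) : ℂ) * (h : ℂ) * ((k : ℂ) + 2) / (q : ℂ))
      - Complex.exp (2 * (Real.pi : ℂ) * Complex.I * (((p : ℕ) : ℂ) ^ (k + 2)) * (h : ℂ) / (q : ℂ)))
      / (((k : ℂ) + 2) * ((p : ℕ) : ℂ) ^ (s * ((k : ℂ) + 2)))

/-- `U_{h,q}(s)`. -/
def Uhq (h : ℤ) (q : ℕ) (s : ℂ) : ℂ :=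
  -((mphi q : ℝ) : ℂ) * ∑ p ∈ q.primeFactors, ∑' k : ℕ,
      1 / (((k : ℂ) + 1) * (p : ℂ) ^ (s * ((k : ℂ) + 1)))
  + ∑ p ∈ q.primeFactors, ∑' k : ℕ,
      Complex.exp (2 * (Real.pi : ℂ) * Complex.I * (h : ℂ) * ((p : ℂ) ^ (k + 1)) / (q : ℂ))
        / (((k : ℂ) + 1) * (p : ℂ) ^ (s * ((k : ℂ) + 1)))
  + Thq h q s

/-- log of a Dirichlet L-function as absolutely convergent prime-power sum, for Re(s) > 1. -/
def plogChar {q : ℕ} (χ : DirichletCharacter ℂ q) (s : ℂ) : ℂ :=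
  ∑' (p : Nat.Primes) (k : ℕ),
    χ (((p : ℕ) : ZMod q)) ^ (k + 1) / (((k : ℂ) + 1) * ((p : ℕ) : ℂ) ^ (s * ((k : ℂ) + 1)))

/-- log of the Riemann zeta function as prime-power sum, for Re(s) > 1. -/
def plogZeta (s : ℂ) : ℂ :=
  ∑' (p : Nat.Primes) (k : ℕ),
    1 / (((k : ℂ) + 1) * ((p : ℕ) : ℂ) ^ (s * ((k : ℂ) + 1)))

/-- log L(s, ψ_{h/q}) = ∑_p ∑_{k≥1} e^{2πiphk/q}/(k p^{sk}). -/
def plogPsi (h : ℤ) (q : ℕ) (s : ℂ) : ℂ :=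
  ∑' (p : Nat.Primes) (k : ℕ),
    Complex.exp (2 * (Real.pi : ℂ) * Complex.I * ((p : ℕ) : ℂ) * (h : ℂ) * ((k : ℂ) + 1) / (q : ℂ))
      / (((k : ℂ) + 1) * ((p : ℕ) : ℂ) ^ (s * ((k : ℂ) + 1)))

/-- the sum ∑_p ∑_{k≥1} e^{2πi h p^k/q}/(k p^{sk}). -/
def plogPsiAlt (h : ℤ) (q : ℕ) (s : ℂ) : ℂ :=
  ∑' (p : Nat.Primes) (k : ℕ),
    Complex.exp (2 * (Real.pi : ℂ) * Complex.I * (h : ℂ) * (((p : ℕ) : ℂ) ^ (k + 1)) / (q : ℂ))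
      / (((k : ℂ) + 1) * ((p : ℕ) : ℂ) ^ (s * ((k : ℂ) + 1)))

end


lemma Apd_mul {m n : ℕ} (hm : m ≠ 0) (hn : n ≠ 0) :
    Apd (m * n) = Apd m + Apd n := by
  unfold Apd
  rw [Nat.factorization_mul hm hn,
    Finsupp.sum_add_index' (fun p => zero_mul p) (fun p a b => add_mul a b p)]

lemma Apd_prime {p : ℕ} (hp : p.Prime) : Apd p = p := by
  unfold Apd
  rw [hp.factorization, Finsupp.sum_single_index (zero_mul p), one_mul]

noncomputable def Fhom (s : ℂ) (hs : s ≠ 0) : ℕ →*₀ ℂ where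
  toFun n := (-1) ^ Apd n * (n : ℂ) ^ (-s)
  map_zero' := by
    simp [Nat.cast_zero, zero_cpow (neg_ne_zero.mpr hs)]
  map_one' := by
    simp [Apd]
  map_mul' m n := by
    rcases eq_or_ne m 0 with rfl | hm
    · simp [zero_cpow (neg_ne_zero.mpr hs)]
    rcases eq_or_ne n 0 with rfl | hn
    · simp [zero_cpow (neg_ne_zero.mpr hs)]
    show (-1)^Apd (m*n) * ((m*n : ℕ) : ℂ)^(-s) = ((-1)^Apd m * (m:ℂ)^(-s)) * ((-1)^Apd n * (n:ℂ)^(-s))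
    rw [Apd_mul hm hn, pow_add, Nat.cast_mul,
      show ((m:ℕ):ℂ) = ((m:ℝ):ℂ) from by push_cast; ring,
      show ((n:ℕ):ℂ) = ((n:ℝ):ℂ) from by push_cast; ring,
      mul_cpow_ofReal_nonneg (by positivity : (0:ℝ) ≤ (m:ℝ)) (by positivity : (0:ℝ) ≤ (n:ℝ))]
    ring

theorem stmt15 (s : ℂ) (hs : 1 < s.re) :
    ∑' n : ℕ, ((-1 : ℂ) ^ Apd n) / (n : ℂ) ^ s
      = (2 ^ s + 1) / (2 ^ s - 1) * (riemannZeta (2 * s) / riemannZeta s) := by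
  have hs0 : s ≠ 0 := ne_zero_of_one_lt_re hs
  set F := Fhom s hs0 with hF
  have hFn : ∀ n : ℕ, F n = (-1) ^ Apd n * (n : ℂ) ^ (-s) := fun n => rfl
  have hsum : Summable (fun n ↦ ‖F n‖) := by
    apply (summable_riemannZetaSummand hs).of_nonneg_of_le (fun _ => norm_nonneg _)
    intro n
    simp only [hFn, norm_mul, norm_pow, norm_neg, norm_one, one_pow, one_mul,
      riemannZetaSummandHom, MonoidWithZeroHom.coe_mk, ZeroHom.coe_mk]
    exact le_rfl
  have hprod := EulerProduct.eulerProduct_completely_multiplicative_hasProd hsum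
  have hLsum : ∑' n : ℕ, ((-1 : ℂ) ^ Apd n) / (n : ℂ) ^ s = ∑' n : ℕ, F n := by
    refine tsum_congr fun n => ?_
    rw [hFn, cpow_neg, div_eq_mul_inv]
  rw [hLsum]
  set L := ∑' n : ℕ, F n with hL
  -- zeta Euler products
  have hz1 := riemannZeta_eulerProduct_hasProd hs
  have hz2 := riemannZeta_eulerProduct_hasProd (s := 2 * s)
    (by rw [mul_re]; norm_num; linarith)
  -- norm facts
  have hnorm : ‖(2:ℂ) ^ (-s)‖ < 1 := by
    rw [show (2:ℂ) = ((2:ℝ):ℂ) by norm_num,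
      norm_cpow_eq_rpow_re_of_pos (by norm_num)]
    exact Real.rpow_lt_one_of_one_lt_of_neg one_lt_two (by simp [neg_re]; linarith)
  have ha1 : (1:ℂ) - 2 ^ (-s) ≠ 0 := by
    intro h
    rw [sub_eq_zero] at h
    rw [← h] at hnorm
    simp at hnorm
  have ha2 : (1:ℂ) + 2 ^ (-s) ≠ 0 := by
    intro h
    have : (2:ℂ) ^ (-s) = -1 := by linear_combination h
    rw [this] at hnorm
    simp at hnorm
  set c : ℂ := (1 + 2 ^ (-s)) / (1 - 2 ^ (-s)) with hc
  set p2 : Nat.Primes := ⟨2, Nat.prime_two⟩ with hp2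
  set d : Nat.Primes → ℂ := fun p => if p = p2 then c else 1 with hd
  have hdprod : HasProd d c := by
    have := hasProd_single (f := d) p2 (fun p hp => by simp [hd, hp])
    simpa [hd] using this
  have hmul1 : HasProd (fun p : Nat.Primes => (1 - F p)⁻¹ * (1 - (p:ℂ) ^ (-s))⁻¹) (L * riemannZeta s) :=
    hprod.mul hz1
  have hmul2 : HasProd (fun p : Nat.Primes => (1 - (p:ℂ) ^ (-(2 * s)))⁻¹ * d p)
      (riemannZeta (2 * s) * c) := hz2.mul hdprod
  have heq : (fun p : Nat.Primes => (1 - F p)⁻¹ * (1 - (p:ℂ) ^ (-s))⁻¹)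
      = fun p : Nat.Primes => (1 - (p:ℂ) ^ (-(2 * s)))⁻¹ * d p := by
    funext p
    have hp := p.2
    have hpne : ((p:ℕ):ℂ) ≠ 0 := Nat.cast_ne_zero.mpr hp.pos.ne'
    have hFp : F (p:ℕ) = (-1) ^ (p:ℕ) * ((p:ℕ):ℂ) ^ (-s) := by rw [hFn, Apd_prime hp]
    have h2s : ((p:ℕ):ℂ) ^ (-(2 * s)) = ((p:ℕ):ℂ) ^ (-s) * ((p:ℕ):ℂ) ^ (-s) := by
      rw [← cpow_add _ _ hpne]; ring_nf
    by_cases h2 : p = p2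
    · have hpn : (p:ℕ) = 2 := by rw [h2]
      rw [hpn] at hFp h2s
      rw [Nat.cast_ofNat] at h2s
      simp only [hpn, hFp, h2s, Nat.cast_ofNat, hd, if_pos h2]
      norm_num
      have hfac : (1:ℂ) - 2 ^ (-s) * 2 ^ (-s) = (1 - 2^(-s)) * (1 + 2^(-s)) := by ring
      rw [hfac, mul_inv, hc]
      field_simp
    · have hpodd : Odd (p:ℕ) := hp.odd_of_ne_two (by
        intro h; exact h2 (Subtype.ext h))
      simp only [hd, if_neg h2, hFp, h2s, hpodd.neg_one_pow, mul_one]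
      rw [show (1:ℂ) - -1 * ((p:ℕ):ℂ)^(-s) = 1 + ((p:ℕ):ℂ)^(-s) from by ring, ← mul_inv]
      congr 1
      ring
  rw [heq] at hmul1
  have key : L * riemannZeta s = riemannZeta (2 * s) * c := hmul1.unique hmul2
  have hζ : riemannZeta s ≠ 0 := riemannZeta_ne_zero_of_one_lt_re hs
  have hb : (2:ℂ) ^ s ≠ 0 := by
    rw [Ne, cpow_eq_zero_iff]
    push_neg
    intro h
    norm_num at h
  have hbinv : (2:ℂ) ^ (-s) = ((2:ℂ) ^ s)⁻¹ := cpow_neg 2 s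
  have ha1' : (1:ℂ) - ((2:ℂ) ^ s)⁻¹ ≠ 0 := hbinv ▸ ha1
  have ha2' : (1:ℂ) + ((2:ℂ) ^ s)⁻¹ ≠ 0 := hbinv ▸ ha2
  have hb1 : (2:ℂ) ^ s - 1 ≠ 0 := by
    intro h
    apply ha1'
    rw [sub_eq_zero] at h ⊢
    rw [h]
    norm_num
  have hLval : L = riemannZeta (2 * s) * c / riemannZeta s := by
    field_simp [key]
    exact key
  rw [hLval, hc, hbinv]
  field_simp
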